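/- In the model plane M²_κ, consider a triangle with vertices A, B, C where |AB| = c > 0, |AC| = b, |BC| = a, and the angle at A is β = ∠(A; B, C). Then as b → 0⁺, a = c - b·cos β + (1/2)·sin²β·(cs_κ(c)/sn_κ(c))·b² + O(b³). -/

import Mathlib

open Real Set

noncomputable def sn (κ t : ℝ) : ℝ :=
  if 0 < κ then Real.sin (Real.sqrt κ * t) / Real.sqrt κ
  else if κ = 0 then t
  else Real.sinh (Real.sqrt (-κ) * t) / Real.sqrt (-κ)

noncomputable def cs (κ t : ℝ) : ℝ :=
  if 0 < κ then Real.cos (Real.sqrt κ * t)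
  else if κ = 0 then 1
  else Real.cosh (Real.sqrt (-κ) * t)

noncomputable def md (κ t : ℝ) : ℝ :=
  if 0 < κ then (1 - Real.cos (Real.sqrt κ * t)) / κ
  else if κ = 0 then t ^ 2 / 2
  else (1 - Real.cosh (Real.sqrt (-κ) * t)) / κ

/-- `f c κ = cs_κ(c) / sn_κ(c)`. -/
noncomputable def fmod (c κ : ℝ) : ℝ := cs κ c / sn κ c


set_option maxHeartbeats 1000000


lemma cos_taylor3 {x : ℝ} (hx : |x| ≤ 1) : |Real.cos x - (1 - x ^ 2 / 2)| ≤ |x| ^ 3 := by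
  have h := Real.cos_bound hx
  have h4 : |x| ^ 4 ≤ |x| ^ 3 := pow_le_pow_of_le_one (abs_nonneg x) hx (by norm_num)
  nlinarith [abs_nonneg x, pow_nonneg (abs_nonneg x) 3]

lemma sin_taylor3 {x : ℝ} (hx : |x| ≤ 1) : |Real.sin x - x| ≤ |x| ^ 3 := by
  have h := Real.sin_bound hx
  have h4 : |x| ^ 4 ≤ |x| ^ 3 := pow_le_pow_of_le_one (abs_nonneg x) hx (by norm_num)
  have h3 : |x ^ 3| = |x| ^ 3 := abs_pow x 3
  have := abs_sub_le (Real.sin x) (x - x ^ 3 / 6) x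
  have h6 : |x - x ^ 3 / 6 - x| = |x| ^ 3 / 6 := by
    rw [show x - x ^ 3 / 6 - x = -(x ^ 3) / 6 by ring, abs_div, abs_neg, h3]; norm_num
  nlinarith [abs_nonneg x, pow_nonneg (abs_nonneg x) 3]



lemma cosh_taylor3 {x : ℝ} (hx : |x| ≤ 1) : |Real.cosh x - (1 + x ^ 2 / 2)| ≤ |x| ^ 3 := by
  have h1 := Real.exp_bound hx (n := 3) (by norm_num)
  have h2 := Real.exp_bound (x := -x) (by rwa [abs_neg]) (n := 3) (by norm_num)
  rw [abs_neg] at h2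
  simp [Finset.sum_range_succ, Nat.factorial] at h1 h2
  have hgoal : Real.cosh x - (1 + x ^ 2 / 2) =
      ((Real.exp x - (1 + x + x ^ 2 / 2)) + (Real.exp (-x) - (1 + -x + x ^ 2 / 2))) / 2 := by
    rw [Real.cosh_eq]; ring
  rw [hgoal]
  have := abs_add_le (Real.exp x - (1 + x + x ^ 2 / 2)) (Real.exp (-x) - (1 + -x + x ^ 2 / 2))
  rw [abs_div, abs_two]
  nlinarith [pow_nonneg (abs_nonneg x) 3]

lemma sinh_taylor3 {x : ℝ} (hx : |x| ≤ 1) : |Real.sinh x - x| ≤ |x| ^ 3 := by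
  have h1 := Real.exp_bound hx (n := 3) (by norm_num)
  have h2 := Real.exp_bound (x := -x) (by rwa [abs_neg]) (n := 3) (by norm_num)
  rw [abs_neg] at h2
  simp [Finset.sum_range_succ, Nat.factorial] at h1 h2
  have hgoal : Real.sinh x - x =
      ((Real.exp x - (1 + x + x ^ 2 / 2)) - (Real.exp (-x) - (1 + -x + x ^ 2 / 2))) / 2 := by
    rw [Real.sinh_eq]; ring
  rw [hgoal]
  have := abs_sub (Real.exp x - (1 + x + x ^ 2 / 2)) (Real.exp (-x) - (1 + -x + x ^ 2 / 2))
  rw [abs_div, abs_two]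
  nlinarith [pow_nonneg (abs_nonneg x) 3]


lemma sin_lower3 {t : ℝ} (h0 : 0 ≤ t) (h1 : t ≤ 1) : 3 / 4 * t ≤ Real.sin t := by
  have h := Real.sin_bound (x := t) (by rwa [abs_of_nonneg h0])
  rw [abs_of_nonneg h0] at h
  have := abs_le.mp h
  nlinarith [pow_le_one₀ h0 h1 (n := 2), pow_le_one₀ h0 h1 (n := 3), pow_nonneg h0 3, pow_nonneg h0 4,
    mul_le_of_le_one_left (pow_nonneg h0 3) h1, mul_le_of_le_one_right h0 (pow_le_one₀ h0 h1 (n := 2)),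
    mul_le_of_le_one_right h0 (pow_le_one₀ h0 h1 (n := 3))]

lemma abs_sin_lower {t : ℝ} (h : |t| ≤ 1) : 3 / 4 * |t| ≤ |Real.sin t| := by
  have h1 : 3 / 4 * |t| ≤ Real.sin |t| := sin_lower3 (abs_nonneg t) h
  rcases abs_cases t with ⟨he, _⟩ | ⟨he, _⟩
  · rw [he] at h1 ⊢; exact h1.trans (le_abs_self _)
  · rw [he] at h1 ⊢; rw [Real.sin_neg] at h1; exact h1.trans (neg_le_abs _)

lemma sin_min_interval {l t : ℝ} (h0 : 0 ≤ l) (hl : l ≤ t) (ht : t ≤ Real.pi - l) :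
    Real.sin l ≤ Real.sin t := by
  have hid : Real.sin t - Real.sin l = 2 * Real.sin ((t - l) / 2) * Real.cos ((t + l) / 2) :=
    Real.sin_sub_sin t l
  have hpi := Real.pi_pos
  have h1 : 0 ≤ Real.sin ((t - l) / 2) := by
    apply Real.sin_nonneg_of_nonneg_of_le_pi <;> nlinarith
  have h2 : 0 ≤ Real.cos ((t + l) / 2) := by
    apply Real.cos_nonneg_of_mem_Icc; constructor <;> [nlinarith; nlinarith]
  nlinarith

lemma self_le_sinh {t : ℝ} (h : 0 ≤ t) : t ≤ Real.sinh t := by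
  rcases eq_or_lt_of_le h with rfl | h
  · simp
  · exact (Real.self_lt_sinh_iff.mpr h).le

lemma abs_self_le_sinh (t : ℝ) : |t| ≤ |Real.sinh t| := by
  have h1 := self_le_sinh (abs_nonneg t)
  rcases abs_cases t with ⟨he, _⟩ | ⟨he, _⟩
  · rw [he] at h1 ⊢; exact h1.trans (le_abs_self _)
  · rw [he] at h1 ⊢; rw [Real.sinh_neg] at h1; exact h1.trans (neg_le_abs _)

lemma cosh_sub_cosh' (x y : ℝ) :
    Real.cosh x - Real.cosh y = 2 * Real.sinh ((x + y) / 2) * Real.sinh ((x - y) / 2) := by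
  have key : ∀ m d : ℝ, Real.cosh (m + d) - Real.cosh (m - d) = 2 * Real.sinh m * Real.sinh d := by
    intro m d; rw [Real.cosh_add, Real.cosh_sub]; ring
  have := key ((x + y) / 2) ((x - y) / 2)
  rwa [show (x + y) / 2 + (x - y) / 2 = x by ring, show (x + y) / 2 - (x - y) / 2 = y by ring] at this

lemma sph_key (C0 β Q : ℝ) (h1 : 0 < C0) (h2 : C0 < Real.pi)
    (hQ : Real.sin C0 * Q = Real.cos C0 * Real.sin β ^ 2 / 2) :
    ∃ C > (0:ℝ), ∃ δ > (0:ℝ), ∀ B X : ℝ, 0 < B → B < δ → |X - C0| ≤ B →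
      Real.cos X = Real.cos B * Real.cos C0 + Real.sin B * Real.sin C0 * Real.cos β →
      |X - (C0 - B * Real.cos β + Q * B ^ 2)| ≤ C * B ^ 3 := by
  have hpi := Real.pi_pos
  obtain ⟨l, hl⟩ : ∃ l : ℝ, l = min C0 (Real.pi - C0) / 2 := ⟨_, rfl⟩
  have hmin : 0 < min C0 (Real.pi - C0) := lt_min h1 (by linarith)
  have hlpos : 0 < l := by rw [hl]; linarith
  have hlC0 : 2 * l ≤ C0 := by
    have := min_le_left C0 (Real.pi - C0); rw [hl]; linarith
  have hlpi : C0 ≤ Real.pi - 2 * l := by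
    have := min_le_right C0 (Real.pi - C0); rw [hl]; linarith
  have hllt : l < Real.pi := by nlinarith
  have hsl : 0 < Real.sin l := Real.sin_pos_of_pos_of_lt_pi hlpos hllt
  have hQ0 : (0:ℝ) ≤ |Q| := abs_nonneg Q
  refine ⟨(18 + |Q| + Q ^ 2) * (4 / (3 * Real.sin l)), by positivity,
    min (min (l / 2) (1 / 2)) (1 / (2 * (1 + |Q|))), by positivity, ?_⟩
  intro B X hB hBδ hX heq
  have hB12 : B ≤ 1 / 2 := le_of_lt (lt_of_lt_of_le hBδ ((min_le_left _ _).trans (min_le_right _ _)))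
  have hBl2 : B ≤ l / 2 := le_of_lt (lt_of_lt_of_le hBδ ((min_le_left _ _).trans (min_le_left _ _)))
  have hBQ' : B ≤ 1 / (2 * (1 + |Q|)) := le_of_lt (lt_of_lt_of_le hBδ (min_le_right _ _))
  have hQB : |Q| * B ≤ 1 / 2 := by
    rw [le_div_iff₀ (by positivity)] at hBQ'
    nlinarith
  have hB1 : |B| ≤ 1 := by rw [abs_of_pos hB]; linarith
  obtain ⟨u, hu⟩ : ∃ u : ℝ, u = -B * Real.cos β + Q * B ^ 2 := ⟨_, rfl⟩
  have hu2 : |u| ≤ 2 * B := by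
    rw [hu]
    have h := (abs_add_le (-B * Real.cos β) (Q * B ^ 2))
    have h2 : |(-B) * Real.cos β| = B * |Real.cos β| := by
      rw [abs_mul, abs_neg, abs_of_pos hB]
    have h3 : |Q * B ^ 2| = |Q| * B ^ 2 := by
      rw [abs_mul, abs_pow, abs_of_pos hB]
    nlinarith [Real.abs_cos_le_one β, abs_nonneg (Real.cos β)]
  have hu1 : |u| ≤ 1 := by linarith
  obtain ⟨Y, hY⟩ : ∃ Y : ℝ, Y = C0 + u := ⟨_, rfl⟩
  have hYc : |Y - C0| ≤ 2 * B := by rw [hY]; simpa using hu2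
  have hXc := abs_le.mp hX
  have hYc' := abs_le.mp hYc
  have hXl : l ≤ X := by linarith
  have hXr : X ≤ Real.pi - l := by linarith
  have hYl : l ≤ Y := by linarith
  have hYr : Y ≤ Real.pi - l := by linarith
  -- error terms
  have hB3 : |B| ^ 3 = B ^ 3 := by rw [abs_of_pos hB]
  have hu3 : |u| ^ 3 ≤ 8 * B ^ 3 := by
    calc |u| ^ 3 ≤ (2 * B) ^ 3 := pow_le_pow_left₀ (abs_nonneg u) hu2 3
    _ = 8 * B ^ 3 := by ring
  have E1 : |Real.cos u - (1 - u ^ 2 / 2)| ≤ 8 * B ^ 3 := (cos_taylor3 hu1).trans hu3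
  have E2 : |Real.cos B - (1 - B ^ 2 / 2)| ≤ B ^ 3 := by
    have := cos_taylor3 hB1; rwa [hB3] at this
  have E3 : |Real.sin u - u| ≤ 8 * B ^ 3 := (sin_taylor3 hu1).trans hu3
  have E4 : |Real.sin B - B| ≤ B ^ 3 := by
    have := sin_taylor3 hB1; rwa [hB3] at this
  have key : Real.cos Y - Real.cos X =
      (Real.cos C0 * ((Real.cos u - (1 - u ^ 2 / 2)) - (Real.cos B - (1 - B ^ 2 / 2)))
      - Real.sin C0 * ((Real.sin u - u) + (Real.sin B - B) * Real.cos β))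
      + Real.cos C0 * (Q * Real.cos β * B ^ 3 - Q ^ 2 * B ^ 4 / 2) := by
    rw [heq, hY, Real.cos_add, hu]
    linear_combination (-(B ^ 2)) * hQ - (Real.cos C0 * B ^ 2 / 2) * (Real.sin_sq_add_cos_sq β)
  have tA : |Real.cos C0 * ((Real.cos u - (1 - u ^ 2 / 2)) - (Real.cos B - (1 - B ^ 2 / 2)))| ≤ 9 * B ^ 3 := by
    rw [abs_mul]
    calc |Real.cos C0| * |(Real.cos u - (1 - u ^ 2 / 2)) - (Real.cos B - (1 - B ^ 2 / 2))|
        ≤ 1 * (8 * B ^ 3 + B ^ 3) :=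
          mul_le_mul (Real.abs_cos_le_one C0) ((abs_sub _ _).trans (add_le_add E1 E2))
            (abs_nonneg _) zero_le_one
      _ = 9 * B ^ 3 := by ring
  have tB : |Real.sin C0 * ((Real.sin u - u) + (Real.sin B - B) * Real.cos β)| ≤ 9 * B ^ 3 := by
    rw [abs_mul]
    have h4 : |(Real.sin B - B) * Real.cos β| ≤ B ^ 3 := by
      rw [abs_mul]
      have := mul_le_mul E4 (Real.abs_cos_le_one β) (abs_nonneg _) (by positivity)
      simpa using this
    calc |Real.sin C0| * |(Real.sin u - u) + (Real.sin B - B) * Real.cos β|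
        ≤ 1 * (8 * B ^ 3 + B ^ 3) :=
          mul_le_mul (Real.abs_sin_le_one C0) ((abs_add_le _ _).trans (add_le_add E3 h4))
            (abs_nonneg _) zero_le_one
      _ = 9 * B ^ 3 := by ring
  have tC : |Real.cos C0 * (Q * Real.cos β * B ^ 3 - Q ^ 2 * B ^ 4 / 2)| ≤ (|Q| + Q ^ 2) * B ^ 3 := by
    rw [abs_mul]
    have h5 : |Q * Real.cos β * B ^ 3 - Q ^ 2 * B ^ 4 / 2| ≤ |Q| * B ^ 3 + Q ^ 2 * B ^ 4 / 2 := by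
      have := abs_sub (Q * Real.cos β * B ^ 3) (Q ^ 2 * B ^ 4 / 2)
      have h6 : |Q * Real.cos β * B ^ 3| ≤ |Q| * B ^ 3 := by
        rw [abs_mul, abs_mul, abs_pow, abs_of_pos hB]
        nlinarith [mul_le_of_le_one_right (abs_nonneg Q) (Real.abs_cos_le_one β), pow_pos hB 3]
      have h7 : |Q ^ 2 * B ^ 4 / 2| = Q ^ 2 * B ^ 4 / 2 := by
        rw [abs_of_nonneg (by positivity)]
      linarith
    have hB4 : B ^ 4 ≤ B ^ 3 := by nlinarith [pow_pos hB 3]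
    calc |Real.cos C0| * |Q * Real.cos β * B ^ 3 - Q ^ 2 * B ^ 4 / 2|
        ≤ 1 * (|Q| * B ^ 3 + Q ^ 2 * B ^ 4 / 2) :=
          mul_le_mul (Real.abs_cos_le_one C0) h5 (abs_nonneg _) zero_le_one
      _ ≤ (|Q| + Q ^ 2) * B ^ 3 := by nlinarith [mul_le_mul_of_nonneg_left hB4 (sq_nonneg Q)]
  have hD : |Real.cos X - Real.cos Y| ≤ (18 + |Q| + Q ^ 2) * B ^ 3 := by
    rw [abs_sub_comm, key]
    have := abs_add_le (Real.cos C0 * ((Real.cos u - (1 - u ^ 2 / 2)) - (Real.cos B - (1 - B ^ 2 / 2)))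
      - Real.sin C0 * ((Real.sin u - u) + (Real.sin B - B) * Real.cos β))
      (Real.cos C0 * (Q * Real.cos β * B ^ 3 - Q ^ 2 * B ^ 4 / 2))
    have := abs_sub (Real.cos C0 * ((Real.cos u - (1 - u ^ 2 / 2)) - (Real.cos B - (1 - B ^ 2 / 2))))
      (Real.sin C0 * ((Real.sin u - u) + (Real.sin B - B) * Real.cos β))
    linarith
  -- lower bound
  have hmid1 : l ≤ (X + Y) / 2 := by linarith
  have hmid2 : (X + Y) / 2 ≤ Real.pi - l := by linarith
  have hs1 : Real.sin l ≤ Real.sin ((X + Y) / 2) := sin_min_interval hlpos.le hmid1 hmid2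
  have hXY : |X - Y| ≤ 3 * B := by
    have := abs_sub_le X C0 Y
    rw [abs_sub_comm C0 Y] at this
    linarith
  have hd2 : |(X - Y) / 2| = |X - Y| / 2 := by rw [abs_div]; norm_num
  have hs2 : 3 / 4 * |(X - Y) / 2| ≤ |Real.sin ((X - Y) / 2)| := by
    apply abs_sin_lower
    rw [hd2]; linarith
  have hid := Real.cos_sub_cos X Y
  have hlow : 3 / 4 * Real.sin l * |X - Y| ≤ |Real.cos X - Real.cos Y| := by
    rw [hid, abs_mul, abs_mul]
    have h1' : Real.sin l ≤ |Real.sin ((X + Y) / 2)| := hs1.trans (le_abs_self _)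
    have h2' : |(-2 : ℝ)| = 2 := by norm_num
    rw [h2']
    rw [hd2] at hs2
    calc 3 / 4 * Real.sin l * |X - Y| = 2 * Real.sin l * (3 / 4 * (|X - Y| / 2)) := by ring
      _ ≤ 2 * Real.sin l * |Real.sin ((X - Y) / 2)| := by gcongr
      _ ≤ 2 * |Real.sin ((X + Y) / 2)| * |Real.sin ((X - Y) / 2)| := by gcongr
  have hgoal : C0 - B * Real.cos β + Q * B ^ 2 = Y := by rw [hY, hu]; ring
  rw [hgoal]
  have h9 : (0:ℝ) < 3 / 4 * Real.sin l := by positivity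
  calc |X - Y| = (3 / 4 * Real.sin l * |X - Y|) / (3 / 4 * Real.sin l) := by field_simp
    _ ≤ ((18 + |Q| + Q ^ 2) * B ^ 3) / (3 / 4 * Real.sin l) :=
        (div_le_div_iff_of_pos_right h9).mpr (hlow.trans hD)
    _ = (18 + |Q| + Q ^ 2) * (4 / (3 * Real.sin l)) * B ^ 3 := by field_simp

lemma hyp_key (C0 β Q : ℝ) (h1 : 0 < C0)
    (hQ : Real.sinh C0 * Q = Real.cosh C0 * Real.sin β ^ 2 / 2) :
    ∃ C > (0:ℝ), ∃ δ > (0:ℝ), ∀ B X : ℝ, 0 < B → B < δ → |X - C0| ≤ B →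
      Real.cosh X = Real.cosh B * Real.cosh C0 - Real.sinh B * Real.sinh C0 * Real.cos β →
      |X - (C0 - B * Real.cos β + Q * B ^ 2)| ≤ C * B ^ 3 := by
  have hM : (1:ℝ) ≤ Real.cosh C0 := Real.one_le_cosh C0
  have hMpos : (0:ℝ) < Real.cosh C0 := by linarith
  have hshM : |Real.sinh C0| ≤ Real.cosh C0 := by
    nlinarith [Real.cosh_sq C0, sq_abs (Real.sinh C0), abs_nonneg (Real.sinh C0)]
  have hQ0 : (0:ℝ) ≤ |Q| := abs_nonneg Q
  refine ⟨(18 + |Q| + Q ^ 2) * Real.cosh C0 * (2 / C0), by positivity,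
    min (min (C0 / 4) (1 / 2)) (1 / (2 * (1 + |Q|))), by positivity, ?_⟩
  intro B X hB hBδ hX heq
  have hB12 : B ≤ 1 / 2 := le_of_lt (lt_of_lt_of_le hBδ ((min_le_left _ _).trans (min_le_right _ _)))
  have hBl2 : B ≤ C0 / 4 := le_of_lt (lt_of_lt_of_le hBδ ((min_le_left _ _).trans (min_le_left _ _)))
  have hBQ' : B ≤ 1 / (2 * (1 + |Q|)) := le_of_lt (lt_of_lt_of_le hBδ (min_le_right _ _))
  have hQB : |Q| * B ≤ 1 / 2 := by
    rw [le_div_iff₀ (by positivity)] at hBQ'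
    nlinarith
  have hB1 : |B| ≤ 1 := by rw [abs_of_pos hB]; linarith
  obtain ⟨u, hu⟩ : ∃ u : ℝ, u = -B * Real.cos β + Q * B ^ 2 := ⟨_, rfl⟩
  have hu2 : |u| ≤ 2 * B := by
    rw [hu]
    have h := (abs_add_le (-B * Real.cos β) (Q * B ^ 2))
    have h2 : |(-B) * Real.cos β| = B * |Real.cos β| := by
      rw [abs_mul, abs_neg, abs_of_pos hB]
    have h3 : |Q * B ^ 2| = |Q| * B ^ 2 := by
      rw [abs_mul, abs_pow, abs_of_pos hB]
    nlinarith [Real.abs_cos_le_one β, abs_nonneg (Real.cos β)]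
  have hu1 : |u| ≤ 1 := by linarith
  obtain ⟨Y, hY⟩ : ∃ Y : ℝ, Y = C0 + u := ⟨_, rfl⟩
  have hYc : |Y - C0| ≤ 2 * B := by rw [hY]; simpa using hu2
  have hXc := abs_le.mp hX
  have hYc' := abs_le.mp hYc
  have hXl : C0 / 2 ≤ X := by linarith
  have hYl : C0 / 2 ≤ Y := by linarith
  -- error terms
  have hB3 : |B| ^ 3 = B ^ 3 := by rw [abs_of_pos hB]
  have hu3 : |u| ^ 3 ≤ 8 * B ^ 3 := by
    calc |u| ^ 3 ≤ (2 * B) ^ 3 := pow_le_pow_left₀ (abs_nonneg u) hu2 3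
    _ = 8 * B ^ 3 := by ring
  have E1 : |Real.cosh u - (1 + u ^ 2 / 2)| ≤ 8 * B ^ 3 := (cosh_taylor3 hu1).trans hu3
  have E2 : |Real.cosh B - (1 + B ^ 2 / 2)| ≤ B ^ 3 := by
    have := cosh_taylor3 hB1; rwa [hB3] at this
  have E3 : |Real.sinh u - u| ≤ 8 * B ^ 3 := (sinh_taylor3 hu1).trans hu3
  have E4 : |Real.sinh B - B| ≤ B ^ 3 := by
    have := sinh_taylor3 hB1; rwa [hB3] at this
  have key : Real.cosh Y - Real.cosh X =
      (Real.cosh C0 * ((Real.cosh u - (1 + u ^ 2 / 2)) - (Real.cosh B - (1 + B ^ 2 / 2)))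
      + Real.sinh C0 * ((Real.sinh u - u) + (Real.sinh B - B) * Real.cos β))
      + Real.cosh C0 * (-(Q * Real.cos β * B ^ 3) + Q ^ 2 * B ^ 4 / 2) := by
    rw [heq, hY, Real.cosh_add, hu]
    linear_combination (B ^ 2) * hQ + (Real.cosh C0 * B ^ 2 / 2) * (Real.sin_sq_add_cos_sq β)
  have tA : |Real.cosh C0 * ((Real.cosh u - (1 + u ^ 2 / 2)) - (Real.cosh B - (1 + B ^ 2 / 2)))|
      ≤ Real.cosh C0 * (9 * B ^ 3) := by
    rw [abs_mul, abs_of_pos hMpos]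
    exact mul_le_mul_of_nonneg_left ((abs_sub _ _).trans (by linarith)) hMpos.le
  have tB : |Real.sinh C0 * ((Real.sinh u - u) + (Real.sinh B - B) * Real.cos β)|
      ≤ Real.cosh C0 * (9 * B ^ 3) := by
    rw [abs_mul]
    have h4 : |(Real.sinh B - B) * Real.cos β| ≤ B ^ 3 := by
      rw [abs_mul]
      have := mul_le_mul E4 (Real.abs_cos_le_one β) (abs_nonneg _) (by positivity)
      simpa using this
    have h5 : |(Real.sinh u - u) + (Real.sinh B - B) * Real.cos β| ≤ 9 * B ^ 3 :=
      (abs_add_le _ _).trans (by linarith)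
    exact mul_le_mul hshM h5 (abs_nonneg _) hMpos.le
  have tC : |Real.cosh C0 * (-(Q * Real.cos β * B ^ 3) + Q ^ 2 * B ^ 4 / 2)|
      ≤ Real.cosh C0 * ((|Q| + Q ^ 2) * B ^ 3) := by
    rw [abs_mul, abs_of_pos hMpos]
    apply mul_le_mul_of_nonneg_left ?_ hMpos.le
    have h6 : |Q * Real.cos β * B ^ 3| ≤ |Q| * B ^ 3 := by
      rw [abs_mul, abs_mul, abs_pow, abs_of_pos hB]
      nlinarith [mul_le_of_le_one_right (abs_nonneg Q) (Real.abs_cos_le_one β), pow_pos hB 3]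
    have h7 : |Q ^ 2 * B ^ 4 / 2| = Q ^ 2 * B ^ 4 / 2 := by
      rw [abs_of_nonneg (by positivity)]
    have hB4 : B ^ 4 ≤ B ^ 3 := by nlinarith [pow_pos hB 3]
    have := abs_add_le (-(Q * Real.cos β * B ^ 3)) (Q ^ 2 * B ^ 4 / 2)
    rw [abs_neg] at this
    nlinarith [mul_le_mul_of_nonneg_left hB4 (sq_nonneg Q)]
  have hD : |Real.cosh X - Real.cosh Y| ≤ (18 + |Q| + Q ^ 2) * Real.cosh C0 * B ^ 3 := by
    rw [abs_sub_comm, key]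
    have := abs_add_le (Real.cosh C0 * ((Real.cosh u - (1 + u ^ 2 / 2)) - (Real.cosh B - (1 + B ^ 2 / 2)))
      + Real.sinh C0 * ((Real.sinh u - u) + (Real.sinh B - B) * Real.cos β))
      (Real.cosh C0 * (-(Q * Real.cos β * B ^ 3) + Q ^ 2 * B ^ 4 / 2))
    have := abs_add_le (Real.cosh C0 * ((Real.cosh u - (1 + u ^ 2 / 2)) - (Real.cosh B - (1 + B ^ 2 / 2))))
      (Real.sinh C0 * ((Real.sinh u - u) + (Real.sinh B - B) * Real.cos β))
    nlinarith
  -- lower bound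
  have hmid : C0 / 2 ≤ (X + Y) / 2 := by linarith
  have hs1 : C0 / 2 ≤ Real.sinh ((X + Y) / 2) :=
    hmid.trans (self_le_sinh (by linarith))
  have hs2 : |(X - Y) / 2| ≤ |Real.sinh ((X - Y) / 2)| := abs_self_le_sinh _
  have hd2 : |(X - Y) / 2| = |X - Y| / 2 := by rw [abs_div]; norm_num
  have hlow : C0 / 2 * |X - Y| ≤ |Real.cosh X - Real.cosh Y| := by
    rw [cosh_sub_cosh' X Y, abs_mul, abs_mul]
    rw [hd2] at hs2
    have h2' : |(2 : ℝ)| = 2 := by norm_num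
    rw [h2']
    have h1' : C0 / 2 ≤ |Real.sinh ((X + Y) / 2)| := hs1.trans (le_abs_self _)
    calc C0 / 2 * |X - Y| = 2 * (C0 / 2) * (|X - Y| / 2) := by ring
      _ ≤ 2 * (C0 / 2) * |Real.sinh ((X - Y) / 2)| := by gcongr
      _ ≤ 2 * |Real.sinh ((X + Y) / 2)| * |Real.sinh ((X - Y) / 2)| := by gcongr
  have hgoal : C0 - B * Real.cos β + Q * B ^ 2 = Y := by rw [hY, hu]; ring
  rw [hgoal]
  have h9 : (0:ℝ) < C0 / 2 := by linarith
  calc |X - Y| = (C0 / 2 * |X - Y|) / (C0 / 2) := by field_simp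
    _ ≤ ((18 + |Q| + Q ^ 2) * Real.cosh C0 * B ^ 3) / (C0 / 2) :=
        (div_le_div_iff_of_pos_right h9).mpr (hlow.trans hD)
    _ = (18 + |Q| + Q ^ 2) * Real.cosh C0 * (2 / C0) * B ^ 3 := by field_simp

/-- Second-order Taylor expansion of the side `a = |BC|` of a model triangle in `M²_κ`
with `|AB| = c`, `|AC| = b` and angle `β` at `A`, as `b → 0⁺`:
`a = c - b·cos β + ½ sin²β · (cs_κ(c)/sn_κ(c)) · b² + O(b³)`.
Here `a` is determined by the κ-cosine law in `md` form and `|a - c| ≤ b`. -/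
theorem stmt4 (κ c β : ℝ) (hc : 0 < c) (hcκ : 0 < κ → c < Real.pi / Real.sqrt κ) :
    ∃ C > (0:ℝ), ∃ δ > (0:ℝ), ∀ b a : ℝ, 0 < b → b < δ → 0 ≤ a → |a - c| ≤ b →
      md κ a = md κ b + md κ c - κ * md κ b * md κ c - sn κ b * sn κ c * Real.cos β →
      |a - (c - b * Real.cos β +
        (1 / 2) * (Real.sin β) ^ 2 * fmod c κ * b ^ 2)| ≤ C * b ^ 3 := by
  rcases lt_trichotomy (0:ℝ) κ with hκ | hκ | hκ
  · -- spherical case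
    obtain ⟨s, hsdef⟩ : ∃ s : ℝ, s = Real.sqrt κ := ⟨_, rfl⟩
    have hs : 0 < s := hsdef ▸ Real.sqrt_pos.mpr hκ
    have hss : s * s = κ := hsdef ▸ Real.mul_self_sqrt hκ.le
    have hC0pos : 0 < s * c := mul_pos hs hc
    have hC0pi : s * c < Real.pi := by
      have h := hcκ hκ
      rw [← hsdef, lt_div_iff₀ hs] at h
      linarith
    have hsin : 0 < Real.sin (s * c) := Real.sin_pos_of_pos_of_lt_pi hC0pos hC0pi
    have hfmod : fmod c κ = Real.cos (s * c) * s / Real.sin (s * c) := by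
      simp only [fmod, cs, sn, if_pos hκ, ← hsdef]
      field_simp
    obtain ⟨C, hC, δ, hδ, hkey⟩ := sph_key (s * c) β
      (Real.sin β ^ 2 * Real.cos (s * c) / (2 * Real.sin (s * c))) hC0pos hC0pi
      (by field_simp)
    refine ⟨C * s ^ 2, by positivity, δ / s, by positivity, ?_⟩
    intro b a hb hbδ ha hac heq
    have heq' : Real.cos (s * a) =
        Real.cos (s * b) * Real.cos (s * c) + Real.sin (s * b) * Real.sin (s * c) * Real.cos β := by
      simp only [md, sn, if_pos hκ, ← hsdef] at heq
      rw [← hss] at heq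
      field_simp at heq
      linear_combination -heq
    have hres := hkey (s * b) (s * a) (by positivity)
      (by rw [lt_div_iff₀ hs] at hbδ; linarith [mul_comm b s])
      (by rw [show s * a - s * c = s * (a - c) by ring, abs_mul, abs_of_pos hs]
          exact mul_le_mul_of_nonneg_left hac hs.le) heq'
    have hscale : s * a - (s * c - s * b * Real.cos β +
        Real.sin β ^ 2 * Real.cos (s * c) / (2 * Real.sin (s * c)) * (s * b) ^ 2) =
        s * (a - (c - b * Real.cos β + (1 / 2) * Real.sin β ^ 2 * fmod c κ * b ^ 2)) := by
      rw [hfmod]; field_simp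
    rw [hscale, abs_mul, abs_of_pos hs] at hres
    have h3 : C * (s * b) ^ 3 = s * (C * s ^ 2 * b ^ 3) := by ring
    rw [h3] at hres
    exact le_of_mul_le_mul_left hres hs
  · -- euclidean case
    subst hκ
    have hfmod : fmod c 0 = 1 / c := by
      simp only [fmod, cs, sn]; norm_num
    refine ⟨(1 / c + 1 / (4 * c ^ 2)) * (1 / c), by positivity, min (c / 2) 1, by positivity, ?_⟩
    intro b a hb hbδ ha hac heq
    have hbc : b ≤ c / 2 := le_of_lt (lt_of_lt_of_le hbδ (min_le_left _ _))
    have hb1 : b ≤ 1 := le_of_lt (lt_of_lt_of_le hbδ (min_le_right _ _))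
    simp only [md, sn] at heq
    norm_num at heq
    have ha2 : a ^ 2 = b ^ 2 + c ^ 2 - 2 * b * c * Real.cos β := by linarith
    rw [hfmod]
    obtain ⟨g, hg⟩ : ∃ g : ℝ, g = c - b * Real.cos β + 1 / 2 * Real.sin β ^ 2 * (1 / c) * b ^ 2 :=
      ⟨_, rfl⟩
    rw [← hg]
    have hid : (a - g) * (a + g) =
        Real.sin β ^ 2 * Real.cos β * b ^ 3 / c - Real.sin β ^ 4 * b ^ 4 / (4 * c ^ 2) := by
      have hinv : c * c⁻¹ = 1 := mul_inv_cancel₀ (ne_of_gt hc)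
      rw [hg]
      linear_combination ha2 - b ^ 2 * (Real.sin_sq_add_cos_sq β) -
        (b ^ 2 * Real.sin β ^ 2) * hinv
    have hxc := abs_le.mp hac
    have hgge : c / 2 ≤ g := by
      rw [hg]
      have t1 : b * Real.cos β ≤ b := mul_le_of_le_one_right hb.le (Real.cos_le_one β)
      have t2 : (0:ℝ) ≤ 1 / 2 * Real.sin β ^ 2 * (1 / c) * b ^ 2 := by positivity
      linarith
    have hage : c / 2 ≤ a := by linarith
    have hag : c ≤ a + g := by linarith
    have h1 : |(a - g) * (a + g)| ≤ (1 / c + 1 / (4 * c ^ 2)) * b ^ 3 := by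
      rw [hid]
      have t1 : |Real.sin β ^ 2 * Real.cos β * b ^ 3 / c| ≤ b ^ 3 / c := by
        rw [abs_div, abs_of_pos hc]
        have hn : |Real.sin β ^ 2 * Real.cos β * b ^ 3| ≤ b ^ 3 := by
          rw [abs_mul, abs_mul, abs_pow, abs_pow, abs_of_pos hb]
          have p1 : |Real.sin β| ^ 2 ≤ 1 :=
            pow_le_one₀ (abs_nonneg (Real.sin β)) (Real.abs_sin_le_one β)
          have p2 : |Real.sin β| ^ 2 * |Real.cos β| ≤ 1 :=
            mul_le_one₀ p1 (abs_nonneg _) (Real.abs_cos_le_one β)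
          nlinarith [pow_pos hb 3]
        gcongr
      have t2 : |Real.sin β ^ 4 * b ^ 4 / (4 * c ^ 2)| ≤ b ^ 3 / (4 * c ^ 2) := by
        rw [abs_div, abs_of_pos (show (0:ℝ) < 4 * c ^ 2 by positivity)]
        have hn : |Real.sin β ^ 4 * b ^ 4| ≤ b ^ 3 := by
          rw [abs_mul, abs_pow, abs_pow, abs_of_pos hb]
          have p1 : |Real.sin β| ^ 4 ≤ 1 :=
            pow_le_one₀ (abs_nonneg (Real.sin β)) (Real.abs_sin_le_one β)
          have p2 : b ^ 4 ≤ b ^ 3 := pow_le_pow_of_le_one hb.le hb1 (by norm_num)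
          nlinarith [pow_pos hb 4, pow_pos hb 3]
        gcongr
      calc |Real.sin β ^ 2 * Real.cos β * b ^ 3 / c - Real.sin β ^ 4 * b ^ 4 / (4 * c ^ 2)|
          ≤ |Real.sin β ^ 2 * Real.cos β * b ^ 3 / c| + |Real.sin β ^ 4 * b ^ 4 / (4 * c ^ 2)| :=
            abs_sub _ _
        _ ≤ b ^ 3 / c + b ^ 3 / (4 * c ^ 2) := add_le_add t1 t2
        _ = (1 / c + 1 / (4 * c ^ 2)) * b ^ 3 := by ring
    have h2 : |a - g| * c ≤ |(a - g) * (a + g)| := by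
      rw [abs_mul, abs_of_pos (by linarith : (0:ℝ) < a + g)]
      exact mul_le_mul_of_nonneg_left hag (abs_nonneg _)
    calc |a - g| = (|a - g| * c) / c := by field_simp
      _ ≤ ((1 / c + 1 / (4 * c ^ 2)) * b ^ 3) / c := (div_le_div_iff_of_pos_right hc).mpr (h2.trans h1)
      _ = (1 / c + 1 / (4 * c ^ 2)) * (1 / c) * b ^ 3 := by ring
  · -- hyperbolic case
    obtain ⟨s, hsdef⟩ : ∃ s : ℝ, s = Real.sqrt (-κ) := ⟨_, rfl⟩
    have hs : 0 < s := hsdef ▸ Real.sqrt_pos.mpr (by linarith)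
    have hss : s * s = -κ := hsdef ▸ Real.mul_self_sqrt (by linarith)
    have hC0pos : 0 < s * c := mul_pos hs hc
    have hsinh : 0 < Real.sinh (s * c) := by
      rw [Real.sinh_pos_iff]; exact hC0pos
    have hnlt : ¬ (0 < κ) := by linarith
    have hne : κ ≠ 0 := by linarith
    have hfmod : fmod c κ = Real.cosh (s * c) * s / Real.sinh (s * c) := by
      simp only [fmod, cs, sn, if_neg hnlt, if_neg hne, ← hsdef]
      field_simp
    obtain ⟨C, hC, δ, hδ, hkey⟩ := hyp_key (s * c) β
      (Real.sin β ^ 2 * Real.cosh (s * c) / (2 * Real.sinh (s * c))) hC0pos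
      (by field_simp)
    refine ⟨C * s ^ 2, by positivity, δ / s, by positivity, ?_⟩
    intro b a hb hbδ ha hac heq
    have heq' : Real.cosh (s * a) =
        Real.cosh (s * b) * Real.cosh (s * c) - Real.sinh (s * b) * Real.sinh (s * c) * Real.cos β := by
      simp only [md, sn, if_neg hnlt, if_neg hne, ← hsdef] at heq
      rw [show κ = -(s*s) by linarith [hss]] at heq
      field_simp at heq
      have heq2 : s ^ 4 * Real.cosh (s * a) = s ^ 4 *
          (Real.cosh (s * b) * Real.cosh (s * c) - Real.sinh (s * b) * Real.sinh (s * c) * Real.cos β) := by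
        linear_combination (s ^ 4) * heq
      exact mul_left_cancel₀ (pow_ne_zero 4 (ne_of_gt hs)) heq2
    have hres := hkey (s * b) (s * a) (by positivity)
      (by rw [lt_div_iff₀ hs] at hbδ; linarith [mul_comm b s])
      (by rw [show s * a - s * c = s * (a - c) by ring, abs_mul, abs_of_pos hs]
          exact mul_le_mul_of_nonneg_left hac hs.le) heq'
    have hscale : s * a - (s * c - s * b * Real.cos β +
        Real.sin β ^ 2 * Real.cosh (s * c) / (2 * Real.sinh (s * c)) * (s * b) ^ 2) =
        s * (a - (c - b * Real.cos β + (1 / 2) * Real.sin β ^ 2 * fmod c κ * b ^ 2)) := by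
      rw [hfmod]; field_simp
    rw [hscale, abs_mul, abs_of_pos hs] at hres
    have h3 : C * (s * b) ^ 3 = s * (C * s ^ 2 * b ^ 3) := by ring
    rw [h3] at hres
    exact le_of_mul_le_mul_left hres hs
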